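/- Let p be an odd prime with p ≡ 3 (mod 4), q = p^m with m odd and 3 ∤ m. Then the number of solutions (x,y,z) ∈ F_q³ of the system x² + y² + z² = 0, x^(p+1) + y^(p+1) + z^(p+1) = 0, x^(p²+1) + y^(p²+1) + z^(p²+1) = 0 equals (p+1)(q−1) + 1. -/

import Mathlib

open Polynomial


lemma aux_pow_mod_four (p m : ℕ) (hp3 : p % 4 = 3) (hm : Odd m) : p ^ m % 4 = 3 := by
  obtain ⟨k, rfl⟩ := hm
  rw [Nat.pow_mod, hp3]
  have h9 : ∀ j : ℕ, 9 ^ j % 4 = 1 := by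
    intro j; rw [Nat.pow_mod]; simp
  have : (3 : ℕ) ^ (2 * k + 1) = 9 ^ k * 3 := by
    rw [pow_succ, pow_mul]; norm_num
  rw [this, Nat.mul_mod, h9]

lemma aux_sq_sq_zero {K : Type*} [Field K] [Fintype K] (hK : Fintype.card K % 4 = 3)
    {x y : K} (h : x ^ 2 + y ^ 2 = 0) : x = 0 ∧ y = 0 := by
  have hns : ¬ IsSquare (-1 : K) := by
    rw [FiniteField.isSquare_neg_one_iff]; simp [hK]
  by_cases hy : y = 0
  · subst hy
    refine ⟨?_, rfl⟩
    have : x ^ 2 = 0 := by linear_combination h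
    exact pow_eq_zero_iff (by norm_num) |>.mp this
  · exfalso
    apply hns
    refine ⟨x / y, ?_⟩
    field_simp
    linear_combination -h


lemma aux_card_hyperbola (p : ℕ) [Fact p.Prime] (hp2 : p ≠ 2) :
    Fintype.card {v : ZMod p × ZMod p // v.2 ^ 2 = 1 + v.1 ^ 2} = p - 1 := by
  have h2 : (2 : ZMod p) ≠ 0 := by
    intro h
    have h' : ((2 : ℕ) : ZMod p) = 0 := by push_cast; exact h
    rw [ZMod.natCast_eq_zero_iff] at h'
    exact hp2 ((Nat.prime_dvd_prime_iff_eq Fact.out Nat.prime_two).mp h')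
  have e : (ZMod p)ˣ ≃ {v : ZMod p × ZMod p // v.2 ^ 2 = 1 + v.1 ^ 2} :=
    { toFun := fun u => ⟨((((u : ZMod p) - ((u⁻¹ : (ZMod p)ˣ) : ZMod p)) / 2),
        (((u : ZMod p) + ((u⁻¹ : (ZMod p)ˣ) : ZMod p)) / 2)), by
          have huv : (u : ZMod p) * ((u⁻¹ : (ZMod p)ˣ) : ZMod p) = 1 := u.mul_inv
          field_simp
          linear_combination 4 * huv⟩
      invFun := fun v => ⟨v.1.2 + v.1.1, v.1.2 - v.1.1,
        by linear_combination v.prop, by linear_combination v.prop⟩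
      left_inv := fun u => by
        ext
        show (_ + _) / 2 + (_ - _) / 2 = (u : ZMod p)
        field_simp
        ring
      right_inv := fun v => by
        ext : 2
        · show ((v.1.2 + v.1.1) - (v.1.2 - v.1.1)) / 2 = v.1.1
          field_simp
          ring
        · show ((v.1.2 + v.1.1) + (v.1.2 - v.1.1)) / 2 = v.1.2
          field_simp
          ring }
  rw [← Fintype.card_congr e, ZMod.card_units]


lemma aux_card_sqrts (p : ℕ) [Fact p.Prime] (hp2 : ringChar (ZMod p) ≠ 2) (d : ZMod p) :
    (Fintype.card {y : ZMod p // y ^ 2 = d} : ℤ) = quadraticChar (ZMod p) d + 1 := by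
  have h := quadraticChar_card_sqrts hp2 d
  rw [← h]
  norm_cast
  rw [Set.toFinset_card]
  exact Fintype.card_congr (Equiv.subtypeEquivRight (by simp))

lemma aux_card_fiber_sum {K : Type*} [Fintype K] [DecidableEq K] (P : K → K → Prop)
    [∀ x y, Decidable (P x y)] :
    Fintype.card {v : K × K // P v.1 v.2} = ∑ x : K, Fintype.card {y : K // P x y} := by
  rw [Fintype.card_congr (Equiv.subtypeProdEquivSigmaSubtype P), Fintype.card_sigma]

lemma aux_card_circle (p : ℕ) [Fact p.Prime] (hp3 : p % 4 = 3) :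
    Fintype.card {v : ZMod p × ZMod p // v.1 ^ 2 + v.2 ^ 2 + 1 = 0} = p + 1 := by
  have hp : p.Prime := Fact.out
  have hp2 : p ≠ 2 := by rintro rfl; omega
  have hchar : ringChar (ZMod p) ≠ 2 := by rw [ZMod.ringChar_zmod_n]; exact hp2
  have hns : ¬ IsSquare (-1 : ZMod p) := by
    rw [ZMod.exists_sq_eq_neg_one_iff]; simp [hp3]
  have hneg1 : quadraticChar (ZMod p) (-1) = -1 :=
    quadraticChar_neg_one_iff_not_isSquare.mpr hns
  -- circle card as a sum
  have hC : Fintype.card {v : ZMod p × ZMod p // v.1 ^ 2 + v.2 ^ 2 + 1 = 0}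
      = ∑ x : ZMod p, Fintype.card {y : ZMod p // y ^ 2 = -(1 + x ^ 2)} := by
    rw [Fintype.card_congr (Equiv.subtypeEquivRight
      (q := fun v : ZMod p × ZMod p => v.2 ^ 2 = -(1 + v.1 ^ 2))
      (fun v => ⟨fun h => by linear_combination h, fun h => by linear_combination h⟩))]
    exact aux_card_fiber_sum (K := ZMod p) (fun x y => y ^ 2 = -(1 + x ^ 2))
  have hH : Fintype.card {v : ZMod p × ZMod p // v.2 ^ 2 = 1 + v.1 ^ 2}
      = ∑ x : ZMod p, Fintype.card {y : ZMod p // y ^ 2 = 1 + x ^ 2} := by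
    exact aux_card_fiber_sum (K := ZMod p) (fun x y => y ^ 2 = 1 + x ^ 2)
  have key : (Fintype.card {v : ZMod p × ZMod p // v.1 ^ 2 + v.2 ^ 2 + 1 = 0} : ℤ)
      + (Fintype.card {v : ZMod p × ZMod p // v.2 ^ 2 = 1 + v.1 ^ 2} : ℤ) = 2 * p := by
    rw [hC, hH]
    push_cast
    rw [← Finset.sum_add_distrib]
    have : ∀ x : ZMod p, (Fintype.card {y : ZMod p // y ^ 2 = -(1 + x ^ 2)} : ℤ)
        + (Fintype.card {y : ZMod p // y ^ 2 = 1 + x ^ 2} : ℤ) = 2 := by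
      intro x
      rw [aux_card_sqrts p hchar, aux_card_sqrts p hchar]
      have : quadraticChar (ZMod p) (-(1 + x ^ 2))
          = - quadraticChar (ZMod p) (1 + x ^ 2) := by
        rw [show -(1 + x ^ 2) = -1 * (1 + x ^ 2) by ring, map_mul, hneg1]
        ring
      rw [this]; ring
    rw [Finset.sum_congr rfl (fun x _ => this x)]
    simp [ZMod.card]
    ring
  rw [aux_card_hyperbola p hp2] at key
  have h1 : 1 ≤ p := hp.one_lt.le.trans' (by norm_num)
  omega



lemma aux_fixed (p : ℕ) [Fact p.Prime] (F : Type*) [Field F] [Fintype F] [DecidableEq F]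
    [CharP F p] (x : F) (hx : x ^ p = x) :
    ∃ c : ZMod p, (ZMod.castHom (dvd_refl p) F) c = x := by
  by_contra hc
  push_neg at hc
  have hp : p.Prime := Fact.out
  set φ := ZMod.castHom (dvd_refl p) F with hφdef
  set Q : F[X] := X ^ p - X with hQdef
  have hdeg : Q.natDegree = p := by
    have h1 : (X : F[X]).natDegree < (X ^ p : F[X]).natDegree := by
      simp only [natDegree_X_pow, natDegree_X]
      exact hp.one_lt
    rw [hQdef, natDegree_sub_eq_left_of_natDegree_lt h1, natDegree_X_pow]
  have hQ0 : Q ≠ 0 := by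
    intro h
    rw [h, natDegree_zero] at hdeg
    exact hp.ne_zero hdeg.symm
  have hroots : ∀ y : F, y ^ p = y → y ∈ Q.roots.toFinset := by
    intro y hy
    rw [Multiset.mem_toFinset, mem_roots hQ0]
    simp [hQdef, sub_eq_zero, hy]
  have himg : insert x (Finset.univ.image φ) ⊆ Q.roots.toFinset := by
    intro y hy
    rcases Finset.mem_insert.mp hy with h | h
    · exact h ▸ hroots x hx
    · obtain ⟨c, _, rfl⟩ := Finset.mem_image.mp h
      apply hroots
      rw [← map_pow, ZMod.pow_card]
  have hxnot : x ∉ Finset.univ.image φ := by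
    simp only [Finset.mem_image, Finset.mem_univ, true_and]
    rintro ⟨c, hc'⟩
    exact hc c hc'
  have hcard1 : (insert x (Finset.univ.image φ)).card = p + 1 := by
    rw [Finset.card_insert_of_notMem hxnot,
      Finset.card_image_of_injective _ φ.injective]
    simp [ZMod.card]
  have hle : (insert x (Finset.univ.image φ)).card ≤ Q.roots.toFinset.card :=
    Finset.card_le_card himg
  have hle2 : Q.roots.toFinset.card ≤ p :=
    le_trans (Multiset.toFinset_card_le _) (le_trans (card_roots' Q) hdeg.le)
  omega



def auxMap (p : ℕ) [Fact p.Prime] (F : Type*) [Field F] [CharP F p] :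
    ({w : ZMod p × ZMod p // w.1 ^ 2 + w.2 ^ 2 + 1 = 0} × Fˣ) ⊕ Unit → F × F × F
  | Sum.inl (⟨⟨a, b⟩, _⟩, z) =>
      (ZMod.castHom (dvd_refl p) F a * z, ZMod.castHom (dvd_refl p) F b * z, z)
  | Sum.inr _ => (0, 0, 0)

lemma aux_main (p : ℕ) [Fact p.Prime] (hp3 : p % 4 = 3)
    (F : Type*) [Field F] [Fintype F] [DecidableEq F] [CharP F p]
    (hq4 : Fintype.card F % 4 = 3) :
    Fintype.card {v : F × F × F //
        v.1 ^ 2 + v.2.1 ^ 2 + v.2.2 ^ 2 = 0 ∧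
        v.1 ^ (p + 1) + v.2.1 ^ (p + 1) + v.2.2 ^ (p + 1) = 0 ∧
        v.1 ^ (p ^ 2 + 1) + v.2.1 ^ (p ^ 2 + 1) + v.2.2 ^ (p ^ 2 + 1) = 0} =
      (p + 1) * (Fintype.card F - 1) + 1 := by
  have hp : p.Prime := Fact.out
  have hpodd : Odd p := by
    rcases Nat.even_or_odd p with h | h
    · rw [Nat.even_iff] at h; omega
    · exact h
  set φ := ZMod.castHom (dvd_refl p) F with hφdef
  -- membership
  have hmem : ∀ t, (auxMap p F t).1 ^ 2 + (auxMap p F t).2.1 ^ 2 + (auxMap p F t).2.2 ^ 2 = 0 ∧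
      (auxMap p F t).1 ^ (p + 1) + (auxMap p F t).2.1 ^ (p + 1) + (auxMap p F t).2.2 ^ (p + 1) = 0 ∧
      (auxMap p F t).1 ^ (p ^ 2 + 1) + (auxMap p F t).2.1 ^ (p ^ 2 + 1) + (auxMap p F t).2.2 ^ (p ^ 2 + 1) = 0 := by
    rintro (⟨⟨⟨a, b⟩, hab⟩, z⟩ | ⟨⟩)
    · show (φ a * z) ^ 2 + (φ b * z) ^ 2 + (z : F) ^ 2 = 0 ∧
        (φ a * z) ^ (p + 1) + (φ b * z) ^ (p + 1) + (z : F) ^ (p + 1) = 0 ∧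
        (φ a * z) ^ (p ^ 2 + 1) + (φ b * z) ^ (p ^ 2 + 1) + (z : F) ^ (p ^ 2 + 1) = 0
      have hA : (φ a) ^ p = φ a := by rw [← map_pow, ZMod.pow_card]
      have hB : (φ b) ^ p = φ b := by rw [← map_pow, ZMod.pow_card]
      have hab' : (φ a) ^ 2 + (φ b) ^ 2 + 1 = 0 := by
        have := congrArg φ hab
        simpa using this
      have hA2 : (φ a) ^ (p + 1) = (φ a) ^ 2 := by rw [pow_succ, hA, ← pow_two]
      have hB2 : (φ b) ^ (p + 1) = (φ b) ^ 2 := by rw [pow_succ, hB, ← pow_two]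
      have hA3 : (φ a) ^ (p ^ 2 + 1) = (φ a) ^ 2 := by
        rw [pow_succ, pow_two p, pow_mul, hA, hA, ← pow_two]
      have hB3 : (φ b) ^ (p ^ 2 + 1) = (φ b) ^ 2 := by
        rw [pow_succ, pow_two p, pow_mul, hB, hB, ← pow_two]
      refine ⟨by linear_combination (z : F) ^ 2 * hab', ?_, ?_⟩
      · linear_combination (z : F) ^ (p + 1) * hA2 + (z : F) ^ (p + 1) * hB2 +
          (z : F) ^ (p + 1) * hab'
      · linear_combination (z : F) ^ (p ^ 2 + 1) * hA3 + (z : F) ^ (p ^ 2 + 1) * hB3 +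
          (z : F) ^ (p ^ 2 + 1) * hab'
    · refine ⟨by simp [auxMap], by simp [auxMap, pow_succ], by simp [auxMap, pow_succ]⟩
  -- injectivity
  have hinj : Function.Injective (auxMap p F) := by
    rintro (⟨⟨⟨a, b⟩, hab⟩, z⟩ | ⟨⟩) (⟨⟨⟨a', b'⟩, hab'⟩, z'⟩ | ⟨⟩) h
    · simp only [auxMap, Prod.mk.injEq] at h
      obtain ⟨h1, h2, h3⟩ := h
      have hzz : z = z' := Units.ext h3
      subst hzz
      have ha : a = a' := φ.injective (mul_right_cancel₀ z.ne_zero h1)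
      have hb : b = b' := φ.injective (mul_right_cancel₀ z.ne_zero h2)
      subst ha; subst hb; rfl
    · exfalso
      simp only [auxMap, Prod.mk.injEq] at h
      exact z.ne_zero h.2.2
    · exfalso
      simp only [auxMap, Prod.mk.injEq] at h
      exact z'.ne_zero h.2.2.symm
    · rfl
  -- surjectivity onto the solution set
  have hsurj : ∀ v : F × F × F,
      v.1 ^ 2 + v.2.1 ^ 2 + v.2.2 ^ 2 = 0 →
      v.1 ^ (p + 1) + v.2.1 ^ (p + 1) + v.2.2 ^ (p + 1) = 0 →
      ∃ t, auxMap p F t = v := by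
    rintro ⟨x, y, z⟩ h1 h2
    simp only at h1 h2
    by_cases hz : z = 0
    · subst hz
      have h0 : x ^ 2 + y ^ 2 = 0 := by linear_combination h1
      obtain ⟨hx0, hy0⟩ := aux_sq_sq_zero hq4 h0
      exact ⟨Sum.inr (), by simp [auxMap, hx0, hy0]⟩
    · have h1' : (x * z⁻¹) ^ 2 + (y * z⁻¹) ^ 2 + 1 = 0 := by
        field_simp
        linear_combination h1
      have h2' : (x * z⁻¹) ^ (p + 1) + (y * z⁻¹) ^ (p + 1) + 1 = 0 := by
        have hzp : z ^ (p + 1) ≠ 0 := pow_ne_zero _ hz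
        have : (x * z⁻¹) ^ (p + 1) + (y * z⁻¹) ^ (p + 1) + 1
            = (x ^ (p + 1) + y ^ (p + 1) + z ^ (p + 1)) * (z ^ (p + 1))⁻¹ := by
          rw [mul_pow, mul_pow, inv_pow, add_mul, add_mul, mul_inv_cancel₀ hzp]
        rw [this, h2, zero_mul]
      have hfr : ((x * z⁻¹) ^ 2 + (y * z⁻¹) ^ 2) ^ p
          = ((x * z⁻¹) ^ 2) ^ p + ((y * z⁻¹) ^ 2) ^ p := add_pow_char _ _ p
      have hs : (x * z⁻¹) ^ 2 + (y * z⁻¹) ^ 2 = -1 := by linear_combination h1'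
      have e1 : ((x * z⁻¹) ^ 2) ^ p + ((y * z⁻¹) ^ 2) ^ p = -1 := by
        rw [← hfr, hs, hpodd.neg_one_pow]
      have key : ((x * z⁻¹) ^ p - x * z⁻¹) ^ 2 + ((y * z⁻¹) ^ p - y * z⁻¹) ^ 2 = 0 := by
        linear_combination e1 + h1' - 2 * h2'
      obtain ⟨hA0, hB0⟩ := aux_sq_sq_zero hq4 key
      have hA : (x * z⁻¹) ^ p = x * z⁻¹ := by linear_combination hA0
      have hB : (y * z⁻¹) ^ p = y * z⁻¹ := by linear_combination hB0
      obtain ⟨c, hc⟩ := aux_fixed p F _ hA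
      obtain ⟨d, hd⟩ := aux_fixed p F _ hB
      have hcd : c ^ 2 + d ^ 2 + 1 = 0 := by
        apply φ.injective
        simp only [map_add, map_pow, map_one, map_zero]
        rw [hc, hd]
        exact h1'
      refine ⟨Sum.inl ⟨⟨⟨c, d⟩, hcd⟩, Units.mk0 z hz⟩, ?_⟩
      show (φ c * z, φ d * z, z) = (x, y, z)
      rw [hc, hd]
      field_simp
  -- assemble the equivalence and count
  have e : (({w : ZMod p × ZMod p // w.1 ^ 2 + w.2 ^ 2 + 1 = 0} × Fˣ) ⊕ Unit) ≃
      {v : F × F × F //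
        v.1 ^ 2 + v.2.1 ^ 2 + v.2.2 ^ 2 = 0 ∧
        v.1 ^ (p + 1) + v.2.1 ^ (p + 1) + v.2.2 ^ (p + 1) = 0 ∧
        v.1 ^ (p ^ 2 + 1) + v.2.1 ^ (p ^ 2 + 1) + v.2.2 ^ (p ^ 2 + 1) = 0} := by
    refine Equiv.ofBijective (fun t => ⟨auxMap p F t, hmem t⟩) ⟨?_, ?_⟩
    · intro t t' h
      exact hinj (congrArg Subtype.val h)
    · rintro ⟨v, hv1, hv2, hv3⟩
      obtain ⟨t, ht⟩ := hsurj v hv1 hv2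
      exact ⟨t, Subtype.ext ht⟩
  rw [← Fintype.card_congr e, Fintype.card_sum, Fintype.card_prod,
    aux_card_circle p hp3, Fintype.card_units]
  simp


theorem stmt_3 (p m : ℕ) (hp : p.Prime) (hp3 : p % 4 = 3) (hm : Odd m)
    (hm3 : ¬ (3 ∣ m))
    (F : Type*) [Field F] [Fintype F] [DecidableEq F]
    (hcard : Fintype.card F = p ^ m) :
    Fintype.card {v : F × F × F //
        v.1 ^ 2 + v.2.1 ^ 2 + v.2.2 ^ 2 = 0 ∧
        v.1 ^ (p + 1) + v.2.1 ^ (p + 1) + v.2.2 ^ (p + 1) = 0 ∧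
        v.1 ^ (p ^ 2 + 1) + v.2.1 ^ (p ^ 2 + 1) + v.2.2 ^ (p ^ 2 + 1) = 0} =
      (p + 1) * (p ^ m - 1) + 1 := by
  haveI : Fact p.Prime := ⟨hp⟩
  haveI hFp : CharP F p := by
    haveI := ringChar.charP F
    obtain ⟨n, hr_prime, hn⟩ := FiniteField.card F (ringChar F)
    have hdvd : ringChar F ∣ p ^ m := by
      rw [← hcard, hn]
      exact dvd_pow_self _ (by positivity)
    have : ringChar F = p :=
      (Nat.prime_dvd_prime_iff_eq hr_prime hp).mp (hr_prime.dvd_of_dvd_pow hdvd)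
    rw [← this]
    infer_instance
  have hq4 : Fintype.card F % 4 = 3 := by
    rw [hcard]; exact aux_pow_mod_four p m hp3 hm
  rw [← hcard]
  exact aux_main p hp3 F hq4
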